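/- Let (X, dist) be a metric space, let m ≥ 1, k ≥ 1, and z ≥ 0 be integers with z ≤ n and n ≥ 1, and let ε ∈ (0,1). For c : Fin k → X define the z-outlier cost cost_m^z(p, c) as the minimum over all subsets O ⊆ Fin n with |O| ≤ z of Σ_{t ∉ O} (min_{i<k} dist(p t, c i))^m. Let p, q : Fin n → X satisfy Σ_{t<n} dist(p t, q t)^m ≤ (ε/(2m))^m · ⨅_{c' : Fin (k+z) → X} cost_m(p, c') (the unconstrained optimum with k+z centers). Then for every c : Fin k → X, |cost_m^z(p, c) − cost_m^z(q, c)| ≤ ε · cost_m^z(p, c). -/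

import Mathlib

/-- The `k`-clustering cost of points `p` with centers `c`. -/
noncomputable def clusterCost {X : Type*} [MetricSpace X] {n k : ℕ} (m : ℕ)
    (p : Fin n → X) (c : Fin k → X) : ℝ :=
  ∑ t, (⨅ i, dist (p t) (c i)) ^ m

/-- The `z`-outlier clustering cost: up to `z` points may be discarded and do
not contribute to the cost. -/
noncomputable def outlierCost {X : Type*} [MetricSpace X] {n k : ℕ} (m z : ℕ)
    (p : Fin n → X) (c : Fin k → X) : ℝ :=
  sInf {x | ∃ O : Finset (Fin n), O.card ≤ z ∧
    x = ∑ t ∈ Oᶜ, (⨅ i, dist (p t) (c i)) ^ m}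

lemma aux_pow_add_le {m : ℕ} (hm : 1 ≤ m) {a b u : ℝ} (ha : 0 ≤ a) (hb : 0 ≤ b) (hu : 0 < u) :
    (a + b) ^ m ≤ (1 + u) ^ (m - 1) * a ^ m + ((1 + u) / u) ^ (m - 1) * b ^ m := by
  obtain ⟨m', rfl⟩ : ∃ m', m = m' + 1 := ⟨m - 1, (Nat.succ_pred_eq_of_pos hm).symm⟩
  simp only [Nat.add_sub_cancel]
  have h1u : (0:ℝ) < 1 + u := by linarith
  have key := (convexOn_pow (𝕜 := ℝ) (m' + 1)).2
    (Set.mem_Ici.2 (by positivity : (0:ℝ) ≤ a * (1 + u)))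
    (Set.mem_Ici.2 (by positivity : (0:ℝ) ≤ b * (1 + u) / u))
    (by positivity : (0:ℝ) ≤ 1 / (1 + u)) (by positivity : (0:ℝ) ≤ u / (1 + u))
    (by field_simp)
  simp only [smul_eq_mul] at key
  have hxy : 1 / (1 + u) * (a * (1 + u)) + u / (1 + u) * (b * (1 + u) / u) = a + b := by
    field_simp
  rw [hxy] at key
  refine key.trans (le_of_eq ?_)
  rw [show b * (1 + u) / u = b * ((1 + u) / u) by ring, mul_pow, mul_pow,
    show (1+u)^(m'+1) = (1+u)^m' * (1+u) by ring, show ((1+u)/u)^(m'+1) = ((1+u)/u)^m' * ((1+u)/u) by ring]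
  field_simp

lemma aux_numeric {m : ℕ} (hm : 1 ≤ m) {ε : ℝ} (hε0 : 0 < ε) (hε1 : ε ≤ 1) :
    (1 + ε / (2 * m)) ^ m ≤ 1 + ε := by
  have hm0 : (0:ℝ) < m := by exact_mod_cast hm
  set u : ℝ := ε / (2 * m) with hu
  have hu0 : 0 < u := by positivity
  have h1 : (1 + u) ^ m ≤ Real.exp u ^ m :=
    pow_le_pow_left₀ (by positivity) (by linarith [Real.add_one_le_exp u]) m
  have h2 : Real.exp u ^ m = Real.exp (u * m) := by
    rw [mul_comm, Real.exp_nat_mul]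
  have h3 : u * m = ε / 2 := by rw [hu, div_mul_eq_mul_div, div_eq_iff (by positivity)]; ring
  have h4 : 1 - ε / 2 ≤ Real.exp (-(ε / 2)) := by linarith [Real.add_one_le_exp (-(ε / 2))]
  have h5 : Real.exp (-(ε/2)) * Real.exp (ε/2) = 1 := by
    rw [← Real.exp_add]; simp
  have h6 : Real.exp (ε / 2) ≤ 1 + ε := by
    nlinarith [Real.exp_pos (ε/2), Real.exp_pos (-(ε/2))]
  calc (1 + u) ^ m ≤ Real.exp (u * m) := by rw [← h2]; exact h1
    _ = Real.exp (ε/2) := by rw [h3]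
    _ ≤ 1 + ε := h6

lemma aux_bddBelow {X : Type*} [MetricSpace X] {n k : ℕ} (m z : ℕ)
    (p : Fin n → X) (c : Fin k → X) :
    BddBelow {x : ℝ | ∃ O : Finset (Fin n), O.card ≤ z ∧
      x = ∑ t ∈ Oᶜ, (⨅ i, dist (p t) (c i)) ^ m} := by
  refine ⟨0, ?_⟩
  rintro x ⟨O, hO, rfl⟩
  exact Finset.sum_nonneg fun t _ => pow_nonneg (Real.iInf_nonneg fun i => dist_nonneg) m

lemma aux_outlier_le {X : Type*} [MetricSpace X] {n k : ℕ} (m z : ℕ)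
    (p : Fin n → X) (c : Fin k → X) (O : Finset (Fin n)) (hO : O.card ≤ z) :
    outlierCost m z p c ≤ ∑ t ∈ Oᶜ, (⨅ i, dist (p t) (c i)) ^ m :=
  csInf_le (aux_bddBelow m z p c) ⟨O, hO, rfl⟩

lemma aux_outlier_exists {X : Type*} [MetricSpace X] {n k : ℕ} (m z : ℕ)
    (p : Fin n → X) (c : Fin k → X) :
    ∃ O : Finset (Fin n), O.card ≤ z ∧
      outlierCost m z p c = ∑ t ∈ Oᶜ, (⨅ i, dist (p t) (c i)) ^ m := by
  have hfin : {x : ℝ | ∃ O : Finset (Fin n), O.card ≤ z ∧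
      x = ∑ t ∈ Oᶜ, (⨅ i, dist (p t) (c i)) ^ m}.Finite := by
    have : {x : ℝ | ∃ O : Finset (Fin n), O.card ≤ z ∧
        x = ∑ t ∈ Oᶜ, (⨅ i, dist (p t) (c i)) ^ m} ⊆
        (fun O : Finset (Fin n) => ∑ t ∈ Oᶜ, (⨅ i, dist (p t) (c i)) ^ m) '' Set.univ := by
      rintro x ⟨O, _, rfl⟩; exact ⟨O, trivial, rfl⟩
    exact Set.Finite.subset ((Set.finite_univ).image _) this
  have hne : {x : ℝ | ∃ O : Finset (Fin n), O.card ≤ z ∧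
      x = ∑ t ∈ Oᶜ, (⨅ i, dist (p t) (c i)) ^ m}.Nonempty :=
    ⟨_, ∅, by simp, rfl⟩
  exact hne.csInf_mem hfin

lemma aux_opt_le {X : Type*} [MetricSpace X] {n k : ℕ} (m z : ℕ) (hm : 1 ≤ m) (hk : 1 ≤ k)
    (hn : 1 ≤ n) (p : Fin n → X) (c : Fin k → X) (O : Finset (Fin n)) (hO : O.card ≤ z) :
    (⨅ c' : Fin (k + z) → X, clusterCost m p c') ≤
      ∑ t ∈ Oᶜ, (⨅ i, dist (p t) (c i)) ^ m := by
  have hX : Nonempty X := ⟨p ⟨0, hn⟩⟩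
  set g : Fin z → X := fun j =>
    if h : (j : ℕ) < O.card then p ((O.orderIsoOfFin rfl) ⟨j, h⟩) else p ⟨0, hn⟩ with hg
  set c' : Fin (k + z) → X := Fin.append c g with hc'
  have hbdd : BddBelow (Set.range fun c'' : Fin (k + z) → X => clusterCost m p c'') := by
    refine ⟨0, ?_⟩
    rintro x ⟨c'', rfl⟩
    exact Finset.sum_nonneg fun t _ => pow_nonneg (Real.iInf_nonneg fun i => dist_nonneg) m
  refine (ciInf_le hbdd c').trans ?_
  have hsplit : clusterCost m p c' =
      (∑ t ∈ O, (⨅ i, dist (p t) (c' i)) ^ m) + ∑ t ∈ Oᶜ, (⨅ i, dist (p t) (c' i)) ^ m :=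
    (Finset.sum_add_sum_compl O _).symm
  rw [hsplit]
  have hzero : ∀ t ∈ O, (⨅ i, dist (p t) (c' i)) ^ m = 0 := by
    intro t ht
    have hb : BddBelow (Set.range fun i : Fin (k + z) => dist (p t) (c' i)) := by
      refine ⟨0, ?_⟩; rintro x ⟨i, rfl⟩; exact dist_nonneg
    set j : Fin O.card := (O.orderIsoOfFin rfl).symm ⟨t, ht⟩ with hj
    have hjlt : (j : ℕ) < O.card := j.2
    have hgval : g (Fin.castLE hO j) = p t := by
      simp only [hg]
      rw [dif_pos (by simpa using hjlt)]
      have : ((O.orderIsoOfFin rfl) ⟨(Fin.castLE hO j : ℕ), by simpa using hjlt⟩ : Fin n)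
          = t := by
        have : (⟨(Fin.castLE hO j : ℕ), by simpa using hjlt⟩ : Fin O.card) = j := by
          ext; simp
        rw [this, hj]
        simp
      rw [this]
    have h1 : (⨅ i, dist (p t) (c' i)) ≤ 0 := by
      refine (ciInf_le hb (Fin.natAdd k (Fin.castLE hO j))).trans ?_
      rw [hc', Fin.append_right, hgval, dist_self]
    have h2 : 0 ≤ ⨅ i, dist (p t) (c' i) := Real.iInf_nonneg fun i => dist_nonneg
    rw [le_antisymm h1 h2]
    exact zero_pow (by omega)
  rw [Finset.sum_eq_zero hzero, zero_add]
  refine Finset.sum_le_sum fun t _ => ?_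
  refine pow_le_pow_left₀ (Real.iInf_nonneg fun i => dist_nonneg) ?_ m
  have hb : BddBelow (Set.range fun i : Fin (k + z) => dist (p t) (c' i)) := by
    refine ⟨0, ?_⟩; rintro x ⟨i, rfl⟩; exact dist_nonneg
  have : Nonempty (Fin k) := Fin.pos_iff_nonempty.mp hk
  refine le_ciInf fun i => ?_
  refine (ciInf_le hb (Fin.castAdd z i)).trans ?_
  rw [hc', Fin.append_left]

lemma aux_sum_bound {X : Type*} [MetricSpace X] {n k : ℕ} (m : ℕ) (hm : 1 ≤ m) (hk : 1 ≤ k)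
    {u : ℝ} (hu : 0 < u) (p q : Fin n → X) (c : Fin k → X) (O : Finset (Fin n)) :
    ∑ t ∈ Oᶜ, (⨅ i, dist (q t) (c i)) ^ m ≤
      (1 + u) ^ (m - 1) * ∑ t ∈ Oᶜ, (⨅ i, dist (p t) (c i)) ^ m +
      ((1 + u) / u) ^ (m - 1) * ∑ t, dist (p t) (q t) ^ m := by
  have hkne : Nonempty (Fin k) := Fin.pos_iff_nonempty.mp hk
  have hbp : ∀ t : Fin n, BddBelow (Set.range fun i : Fin k => dist (p t) (c i)) := by
    intro t; refine ⟨0, ?_⟩; rintro x ⟨i, rfl⟩; exact dist_nonneg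
  have hstep : ∀ t : Fin n, (⨅ i, dist (q t) (c i)) ^ m ≤
      (1 + u) ^ (m - 1) * (⨅ i, dist (p t) (c i)) ^ m +
      ((1 + u) / u) ^ (m - 1) * dist (p t) (q t) ^ m := by
    intro t
    have h1 : (⨅ i, dist (q t) (c i)) ≤ (⨅ i, dist (p t) (c i)) + dist (p t) (q t) := by
      rw [add_comm]
      rw [← sub_le_iff_le_add']
      refine le_ciInf fun i => ?_
      rw [sub_le_iff_le_add']
      have hb : BddBelow (Set.range fun i : Fin k => dist (q t) (c i)) := by
        refine ⟨0, ?_⟩; rintro x ⟨i, rfl⟩; exact dist_nonneg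
      refine (ciInf_le hb i).trans ((dist_triangle (q t) (p t) (c i)).trans_eq ?_)
      rw [dist_comm (q t) (p t)]
    have h2 : (⨅ i, dist (q t) (c i)) ^ m ≤
        ((⨅ i, dist (p t) (c i)) + dist (p t) (q t)) ^ m :=
      pow_le_pow_left₀ (Real.iInf_nonneg fun i => dist_nonneg) h1 m
    exact h2.trans (aux_pow_add_le hm (Real.iInf_nonneg fun i => dist_nonneg) dist_nonneg hu)
  calc ∑ t ∈ Oᶜ, (⨅ i, dist (q t) (c i)) ^ m
      ≤ ∑ t ∈ Oᶜ, ((1 + u) ^ (m - 1) * (⨅ i, dist (p t) (c i)) ^ m +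
        ((1 + u) / u) ^ (m - 1) * dist (p t) (q t) ^ m) :=
        Finset.sum_le_sum fun t _ => hstep t
    _ = (1 + u) ^ (m - 1) * ∑ t ∈ Oᶜ, (⨅ i, dist (p t) (c i)) ^ m +
        ((1 + u) / u) ^ (m - 1) * ∑ t ∈ Oᶜ, dist (p t) (q t) ^ m := by
        rw [Finset.sum_add_distrib, Finset.mul_sum, Finset.mul_sum]
    _ ≤ _ := by
        have h3 : ∑ t ∈ Oᶜ, dist (p t) (q t) ^ m ≤ ∑ t, dist (p t) (q t) ^ m :=
          Finset.sum_le_sum_of_subset_of_nonneg (Finset.subset_univ _)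
            fun t _ _ => by positivity
        have h4 : (0:ℝ) ≤ ((1 + u) / u) ^ (m - 1) := by positivity
        nlinarith [mul_le_mul_of_nonneg_left h3 h4]

theorem movementBased_coreset_for_outliers {X : Type*} [MetricSpace X]
    {n k m z : ℕ} (hm : 1 ≤ m) (hk : 1 ≤ k) (hz : z ≤ n) (hn : 1 ≤ n)
    {ε : ℝ} (hε : ε ∈ Set.Ioo (0 : ℝ) 1)
    (p q : Fin n → X)
    (hmove : ∑ t, dist (p t) (q t) ^ m ≤
      (ε / (2 * m)) ^ m * ⨅ c' : Fin (k + z) → X, clusterCost m p c') :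
    ∀ c : Fin k → X,
      |outlierCost m z p c - outlierCost m z q c| ≤ ε * outlierCost m z p c := by
  intro c
  obtain ⟨hε0, hε1⟩ := hε
  have hm0 : (0:ℝ) < m := by exact_mod_cast hm
  have hm1 : (1:ℝ) ≤ m := by exact_mod_cast hm
  set u : ℝ := ε / (2 * m) with hu_def
  have hu : 0 < u := by positivity
  have hule : u ≤ ε := by
    rw [hu_def, div_le_iff₀ (by positivity)]
    nlinarith
  set A : ℝ := (1 + u) ^ (m - 1) with hA_def
  set B : ℝ := ((1 + u) / u) ^ (m - 1) with hB_def
  have hA1 : 1 ≤ A := one_le_pow₀ (by linarith)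
  have hA0 : 0 < A := lt_of_lt_of_le one_pos hA1
  have hAu : A * (1 + u) = (1 + u) ^ m := by
    rw [hA_def, ← pow_succ]
    congr 1
    omega
  have hnum : A * (1 + u) ≤ 1 + ε := by
    rw [hAu]; exact aux_numeric hm hε0 hε1.le
  have hBu : B * u ^ m = u * A := by
    obtain ⟨m', rfl⟩ : ∃ m', m = m' + 1 := ⟨m - 1, (Nat.succ_pred_eq_of_pos hm).symm⟩
    simp only [hB_def, hA_def, Nat.add_sub_cancel, pow_succ, div_pow, ← mul_assoc]
    rw [div_mul_cancel₀ _ (pow_ne_zero m' hu.ne')]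
    ring
  obtain ⟨Op, hOp, hP⟩ := aux_outlier_exists m z p c
  obtain ⟨Oq, hOq, hQ⟩ := aux_outlier_exists m z q c
  set P := outlierCost m z p c
  set Q := outlierCost m z q c
  have hP0 : 0 ≤ P := by
    rw [hP]
    exact Finset.sum_nonneg fun t _ => pow_nonneg (Real.iInf_nonneg fun i => dist_nonneg) m
  set E : ℝ := ∑ t, dist (p t) (q t) ^ m with hE_def
  have hE0 : 0 ≤ E := Finset.sum_nonneg fun t _ => by positivity
  -- E ≤ u^m * P
  have hOPT : (⨅ c' : Fin (k + z) → X, clusterCost m p c') ≤ P := by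
    rw [hP]; exact aux_opt_le m z hm hk hn p c Op hOp
  have hE : E ≤ u ^ m * P :=
    hmove.trans (mul_le_mul_of_nonneg_left hOPT (by positivity))
  -- Q ≤ A * P + u * A * P
  have hQle : Q ≤ A * P + u * A * P := by
    have h1 : Q ≤ ∑ t ∈ Opᶜ, (⨅ i, dist (q t) (c i)) ^ m := aux_outlier_le m z q c Op hOp
    have h2 := aux_sum_bound m hm hk hu p q c Op
    rw [← hP] at h2
    have h3 : B * E ≤ B * (u ^ m * P) := mul_le_mul_of_nonneg_left hE (by positivity)
    have h4 : B * (u ^ m * P) = u * A * P := by rw [← mul_assoc, hBu]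
    linarith
  -- P ≤ A * Q + u * A * P
  have hPle : P ≤ A * Q + u * A * P := by
    have h1 : P ≤ ∑ t ∈ Oqᶜ, (⨅ i, dist (p t) (c i)) ^ m := aux_outlier_le m z p c Oq hOq
    have h2 := aux_sum_bound m hm hk hu q p c Oq
    simp only [fun t => dist_comm (q t) (p t)] at h2
    rw [← hQ] at h2
    have h3 : B * E ≤ B * (u ^ m * P) := mul_le_mul_of_nonneg_left hE (by positivity)
    have h4 : B * (u ^ m * P) = u * A * P := by rw [← mul_assoc, hBu]
    linarith
  rw [abs_sub_le_iff]
  constructor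
  · -- P - Q ≤ ε * P
    have h5 : A * (1 - ε + u) ≤ 1 := by nlinarith
    have h6 : A * Q ≥ A * ((1 - ε) * P) := by nlinarith
    have h7 : Q ≥ (1 - ε) * P := le_of_mul_le_mul_left h6 hA0
    linarith
  · -- Q - P ≤ ε * P
    nlinarith [mul_le_mul_of_nonneg_right hnum hP0]
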